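/- Let L be a positive integer and v an odd positive integer. Let (Z_v, 𝔇) be an L-(v,g,b) half-sum disjoint packing (HSDP). Then the array P defined by P(f,k) = (f+k, i) if k − f ∈ D_i for some i ∈ [b], and P(f,k) = * otherwise, is an (L, K=v, F=v, Z=v−bg, S=bv) multiple-antenna placement delivery array (MAPDA). -/
import Mathlib


/-- An `L`-`(v,g,b)` half-sum disjoint packing: `b` pairwise disjoint `g`-subsets of
`ZMod v` such that for every block `D i` and every `d ∈ D i`, the half-sum set
`B = {(d + d')/2 : d' ∈ D i \ {d}}` satisfies `∑ i', |D i' ∩ B| < L`. -/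
def IsHSDP (L v g b : ℕ) (D : Fin b → Finset (ZMod v)) : Prop :=
  (∀ i j : Fin b, i ≠ j → Disjoint (D i) (D j)) ∧
  (∀ i : Fin b, (D i).card = g) ∧
  (∀ i : Fin b, ∀ d ∈ D i,
    (∑ i' : Fin b,
      ((D i') ∩ (((D i).erase d).image fun d' => (2 : ZMod v)⁻¹ * (d + d'))).card) < L)

/-- An `(L, K, F, Z, S)` multiple-antenna placement delivery array, with rows `ιF`
(`|ιF| = F`), columns `ιK` (`|ιK| = K`), symbols `σ` (`|σ| = S`), and `*`
represented by `none`: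
(C1) each column has exactly `Z` stars;
(C2) each symbol occurs at least once;
(C3) each symbol appears at most once in each column;
(C4) for each symbol `s`, in the subarray of rows and columns containing `s`,
every row has at most `L` non-star entries. -/
def IsMAPDA {ιF ιK σ : Type*} [Fintype ιF] [Fintype ιK] [DecidableEq σ]
    (L Z : ℕ) (P : ιF → ιK → Option σ) : Prop :=
  (∀ k : ιK, (Finset.univ.filter fun f : ιF => P f k = none).card = Z) ∧
  (∀ s : σ, ∃ f k, P f k = some s) ∧
  (∀ s : σ, ∀ k : ιK, ∀ f₁ f₂ : ιF, P f₁ k = some s → P f₂ k = some s → f₁ = f₂) ∧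
  (∀ s : σ, ∀ f : ιF, (∃ k, P f k = some s) →
    (Finset.univ.filter fun k : ιK => (∃ f', P f' k = some s) ∧ P f k ≠ none).card ≤ L)

/-- given an `L`-`(v,g,b)` HSDP on `ZMod v` (`v` odd), the array
`P(f,k) = (f + k, i)` if `k - f ∈ D i` for some `i`, and `P(f,k) = *` otherwise,
is an `(L, K = v, F = v, Z = v - b*g, S = b*v)` MAPDA (the symbol set
`ZMod v × Fin b` has exactly `b * v` elements). -/
theorem stmt_4 (L v g b : ℕ) [NeZero v] (hv : Odd v) (hL : 0 < L) (hg : 0 < g)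
    (D : Fin b → Finset (ZMod v)) (hD : IsHSDP L v g b D)
    (P : ZMod v → ZMod v → Option (ZMod v × Fin b))
    (hP1 : ∀ f k : ZMod v, ∀ i : Fin b, k - f ∈ D i → P f k = some (f + k, i))
    (hP2 : ∀ f k : ZMod v, (∀ i : Fin b, k - f ∉ D i) → P f k = none) :
    IsMAPDA L (v - b * g) P ∧ Fintype.card (ZMod v × Fin b) = b * v := by
  classical
  obtain ⟨hdisj, hcard, hsum⟩ := hD
  have h2 : (2 : ZMod v)⁻¹ * 2 = 1 := by
    refine ZMod.inv_mul_of_unit _ ?_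
    have := (ZMod.isUnit_iff_coprime 2 v).mpr hv.coprime_two_left
    simpa using this
  have h2c : ∀ a c : ZMod v, 2 * a = 2 * c → a = c := by
    intro a c h
    have := congrArg (fun x => (2 : ZMod v)⁻¹ * x) h
    simpa [← mul_assoc, h2] using this
  have key : ∀ f k : ZMod v, ∀ s : ZMod v × Fin b, P f k = some s →
      k - f ∈ D s.2 ∧ s.1 = f + k := by
    intro f k s h
    by_cases hex : ∃ i, k - f ∈ D i
    · obtain ⟨i, hi⟩ := hex
      rw [hP1 f k i hi] at h
      have : (f + k, i) = s := Option.some.inj h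
      subst this
      exact ⟨hi, rfl⟩
    · push_neg at hex
      rw [hP2 f k hex] at h
      exact absurd h (by simp)
  have hnone : ∀ f k : ZMod v, P f k ≠ none ↔ ∃ i, k - f ∈ D i := by
    intro f k
    constructor
    · intro h
      by_contra hex
      push_neg at hex
      exact h (hP2 f k hex)
    · rintro ⟨i, hi⟩
      rw [hP1 f k i hi]; simp
  have hbu : (Finset.univ.biUnion D).card = b * g := by
    rw [Finset.card_biUnion (fun i _ j _ hij => hdisj i j hij)]
    simp [hcard, mul_comm]
  have hbgv : b * g ≤ v := by
    calc b * g = (Finset.univ.biUnion D).card := hbu.symm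
      _ ≤ Fintype.card (ZMod v) := Finset.card_le_univ _
      _ = v := ZMod.card v
  have hfilt : ∀ k : ZMod v,
      (Finset.univ.filter fun f : ZMod v => ¬ P f k = none).card = b * g := by
    intro k
    have heq : (Finset.univ.filter fun f : ZMod v => ¬ P f k = none)
        = (Finset.univ.biUnion D).image (fun d => k - d) := by
      ext f
      simp only [Finset.mem_filter, Finset.mem_univ, true_and, Finset.mem_image,
        Finset.mem_biUnion, hnone]
      constructor
      · rintro ⟨i, hi⟩
        exact ⟨k - f, ⟨i, hi⟩, by ring⟩
      · rintro ⟨d, ⟨i, hi⟩, rfl⟩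
        exact ⟨i, by simpa using hi⟩
    rw [heq, Finset.card_image_of_injective _ sub_right_injective, hbu]
  refine ⟨⟨?_, ?_, ?_, ?_⟩, by simp [ZMod.card, mul_comm]⟩
  · -- C1
    intro k
    have h := Finset.card_filter_add_card_filter_not
      (s := (Finset.univ : Finset (ZMod v))) (p := fun f => P f k = none)
    rw [hfilt k, Finset.card_univ, ZMod.card] at h
    omega
  · -- C2
    rintro ⟨m, i⟩
    have hne : (D i).Nonempty := Finset.card_pos.mp (by rw [hcard i]; exact hg)
    obtain ⟨d, hd⟩ := hne
    refine ⟨(2 : ZMod v)⁻¹ * (m - d), (2 : ZMod v)⁻¹ * (m + d), ?_⟩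
    have hk : (2 : ZMod v)⁻¹ * (m + d) - (2 : ZMod v)⁻¹ * (m - d) = d := by
      have : (2 : ZMod v)⁻¹ * (m + d) - (2 : ZMod v)⁻¹ * (m - d)
          = ((2 : ZMod v)⁻¹ * 2) * d := by ring
      rw [this, h2, one_mul]
    have hm : (2 : ZMod v)⁻¹ * (m - d) + (2 : ZMod v)⁻¹ * (m + d) = m := by
      have : (2 : ZMod v)⁻¹ * (m - d) + (2 : ZMod v)⁻¹ * (m + d)
          = ((2 : ZMod v)⁻¹ * 2) * m := by ring
      rw [this, h2, one_mul]
    rw [hP1 _ _ i (by rw [hk]; exact hd), hm]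
  · -- C3
    intro s k f₁ f₂ h₁ h₂
    have e₁ := (key _ _ _ h₁).2
    have e₂ := (key _ _ _ h₂).2
    have : f₁ + k = f₂ + k := e₁ ▸ e₂
    exact add_right_cancel this
  · -- C4
    rintro ⟨m, i⟩ f ⟨k₀, hk₀⟩
    obtain ⟨hd, hm⟩ := key _ _ _ hk₀
    simp only at hd hm
    set d : ZMod v := k₀ - f with hd_def
    set B : Finset (ZMod v) :=
      ((D i).erase d).image (fun d' => (2 : ZMod v)⁻¹ * (d + d')) with hB
    have hLsum : (∑ i' : Fin b, ((D i') ∩ B).card) < L := hsum i d hd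
    have hsub : (Finset.univ.filter fun k : ZMod v =>
        (∃ f', P f' k = some (m, i)) ∧ P f k ≠ none)
        ⊆ insert k₀ ((Finset.univ.biUnion fun j => D j ∩ B).image (· + f)) := by
      intro k hk
      simp only [Finset.mem_filter, Finset.mem_univ, true_and] at hk
      obtain ⟨⟨f', hf'⟩, hkf⟩ := hk
      obtain ⟨hd', hm'⟩ := key _ _ _ hf'
      simp only at hd' hm'
      obtain ⟨j, hj⟩ := (hnone f k).mp hkf
      by_cases hkk : k = k₀
      · simp [hkk]
      · have hf'eq : f' = m - k := by
          have : m - k = (f' + k) - k := by rw [hm']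
          simpa using this.symm
        have hd'eq : k - f' = 2 * k - m := by rw [hf'eq]; ring
        have hdd' : k - f' ≠ d := by
          intro h
          apply hkk
          apply h2c
          have hmfk : m = f + k₀ := hm
          have : 2 * k - m = k₀ - f := by rw [← hd'eq, h]
          have h2k : 2 * k = m + k₀ - f := by linear_combination this
          rw [h2k, hmfk]; ring
        have hkfB : k - f ∈ B := by
          rw [hB]
          refine Finset.mem_image.mpr ⟨k - f', Finset.mem_erase.mpr ⟨hdd', hd'⟩, ?_⟩
          have : (2 : ZMod v)⁻¹ * (d + (k - f')) = (2 : ZMod v)⁻¹ * (2 * (k - f)) := by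
            rw [hd_def, hd'eq]
            have hmfk : m = f + k₀ := hm
            rw [hmfk]; ring_nf
          rw [this, ← mul_assoc, h2, one_mul]
        refine Finset.mem_insert_of_mem (Finset.mem_image.mpr ⟨k - f, ?_, by ring⟩)
        exact Finset.mem_biUnion.mpr ⟨j, Finset.mem_univ _, Finset.mem_inter.mpr ⟨hj, hkfB⟩⟩
    calc (Finset.univ.filter fun k : ZMod v =>
            (∃ f', P f' k = some (m, i)) ∧ P f k ≠ none).card
        ≤ (insert k₀ ((Finset.univ.biUnion fun j => D j ∩ B).image (· + f))).card :=
          Finset.card_le_card hsub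
      _ ≤ ((Finset.univ.biUnion fun j => D j ∩ B).image (· + f)).card + 1 :=
          Finset.card_insert_le _ _
      _ ≤ (Finset.univ.biUnion fun j => D j ∩ B).card + 1 :=
          Nat.add_le_add_right Finset.card_image_le 1
      _ ≤ (∑ j : Fin b, ((D j) ∩ B).card) + 1 :=
          Nat.add_le_add_right Finset.card_biUnion_le 1
      _ ≤ L := by omega
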